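/- For every finite group G there exist infinitely many pairwise non-isomorphic finite connected simple graphs Γ such that the automorphism group of Γ is isomorphic to G. -/

import Mathlib

namespace Frucht

open Finset SimpleGraph

noncomputable section

variable (H : Type) [Group H] [Fintype H] [DecidableEq H] (m : ℕ)

abbrev S := {s : H // s ≠ 1}

abbrev N := Fintype.card (S H)

def sig : Fin (N H) ≃ S H := (Fintype.equivFin (S H)).symm

abbrev Fib : Type := (Unit ⊕ Fin (N H) ⊕ Fin (N H)) ⊕ (Σ k : Fin 3, Fin (m + 2 + k.val))

namespace Fib
abbrev c : Fib H m := Sum.inl (Sum.inl ())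
abbrev F (i : Fin (N H)) : Fib H m := Sum.inl (Sum.inr (Sum.inl i))
abbrev M (i : Fin (N H)) : Fib H m := Sum.inl (Sum.inr (Sum.inr i))
abbrev L (k : Fin 3) (j : Fin (m + 2 + k.val)) : Fib H m := Sum.inr ⟨k, j⟩
end Fib

def D : Fib H m → Fib H m → Finset H
  | .inl (.inl _), .inl (.inl _) => ∅
  | .inl (.inl _), .inl (.inr (.inl i)) => {1, (sig H i).val}
  | .inl (.inr (.inl i)), .inl (.inl _) => {1, ((sig H i).val)⁻¹}
  | .inl (.inl _), .inl (.inr (.inr _)) => {1}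
  | .inl (.inr (.inr _)), .inl (.inl _) => {1}
  | .inl (.inr (.inl i)), .inl (.inr (.inr j)) =>
      if j = i then {1} else if i < j then {1, (sig H j).val} else ∅
  | .inl (.inr (.inr j)), .inl (.inr (.inl i)) =>
      if j = i then {1} else if i < j then {1, ((sig H j).val)⁻¹} else ∅
  | .inl (.inl _), .inr ⟨_, j⟩ => if j.val = 0 then {1} else ∅
  | .inr ⟨_, j⟩, .inl (.inl _) => if j.val = 0 then {1} else ∅
  | .inr ⟨k, j⟩, .inr ⟨k', j'⟩ =>
      if k.val = k'.val ∧ (j'.val = j.val + 1 ∨ j.val = j'.val + 1) then {1} else ∅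
  | _, _ => ∅

variable {H m}

@[simp] lemma D_cc : D H m (Fib.c H m) (Fib.c H m) = ∅ := rfl
@[simp] lemma D_cF (i) : D H m (Fib.c H m) (Fib.F H m i) = {1, (sig H i).val} := rfl
@[simp] lemma D_Fc (i) : D H m (Fib.F H m i) (Fib.c H m) = {1, ((sig H i).val)⁻¹} := rfl
@[simp] lemma D_cM (i) : D H m (Fib.c H m) (Fib.M H m i) = {1} := rfl
@[simp] lemma D_Mc (i) : D H m (Fib.M H m i) (Fib.c H m) = {1} := rfl
@[simp] lemma D_FM (i j) : D H m (Fib.F H m i) (Fib.M H m j) =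
    (if j = i then {1} else if i < j then {1, (sig H j).val} else ∅) := rfl
@[simp] lemma D_MF (i j) : D H m (Fib.M H m j) (Fib.F H m i) =
    (if j = i then {1} else if i < j then {1, ((sig H j).val)⁻¹} else ∅) := rfl
@[simp] lemma D_cL (k j) : D H m (Fib.c H m) (Fib.L H m k j) =
    (if j.val = 0 then {1} else ∅) := rfl
@[simp] lemma D_Lc (k j) : D H m (Fib.L H m k j) (Fib.c H m) =
    (if j.val = 0 then {1} else ∅) := rfl
@[simp] lemma D_LL (k j k' j') : D H m (Fib.L H m k j) (Fib.L H m k' j') =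
    (if k.val = k'.val ∧ (j'.val = j.val + 1 ∨ j.val = j'.val + 1) then {1} else ∅) := rfl
@[simp] lemma D_FF (i j) : D H m (Fib.F H m i) (Fib.F H m j) = ∅ := rfl
@[simp] lemma D_MM (i j) : D H m (Fib.M H m i) (Fib.M H m j) = ∅ := rfl
@[simp] lemma D_FL (i k j) : D H m (Fib.F H m i) (Fib.L H m k j) = ∅ := rfl
@[simp] lemma D_LF (i k j) : D H m (Fib.L H m k j) (Fib.F H m i) = ∅ := rfl
@[simp] lemma D_ML (i k j) : D H m (Fib.M H m i) (Fib.L H m k j) = ∅ := rfl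
@[simp] lemma D_LM (i k j) : D H m (Fib.L H m k j) (Fib.M H m i) = ∅ := rfl

lemma D_symm (a b : Fib H m) (d : H) (hd : d ∈ D H m a b) : d⁻¹ ∈ D H m b a := by
  rcases a with (⟨⟩ | i | i) | ⟨k, j⟩ <;> rcases b with (⟨⟩ | i' | i') | ⟨k', j'⟩ <;>
    simp only [D] at hd ⊢ <;>
    (try split_ifs at hd ⊢) <;>
    simp_all [Finset.mem_insert, Finset.mem_singleton, inv_eq_one, inv_inj,
      inv_eq_iff_eq_inv] <;>
    omega

lemma D_self (a : Fib H m) : D H m a a = ∅ := by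
  rcases a with (⟨⟩ | i | i) | ⟨k, j⟩ <;> simp [D]

def Γ : SimpleGraph (H × Fib H m) where
  Adj x y := x.1⁻¹ * y.1 ∈ D H m x.2 y.2
  symm := by
    constructor
    rintro ⟨g, a⟩ ⟨h, b⟩ hx
    have := D_symm a b _ hx
    simpa [mul_inv_rev] using this
  loopless := by
    constructor
    rintro ⟨g, a⟩ hx
    simp only [inv_mul_cancel] at hx
    rw [D_self] at hx
    exact absurd hx (by simp)

variable (H m) in
lemma adj_iff (x y : H × Fib H m) :
    (Γ (H := H) (m := m)).Adj x y ↔ x.1⁻¹ * y.1 ∈ D H m x.2 y.2 := Iff.rfl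


instance : DecidableRel (Γ (H := H) (m := m)).Adj :=
  fun x y => decidable_of_iff (x.1⁻¹ * y.1 ∈ D H m x.2 y.2) Iff.rfl

lemma neighborFinset_eq (g : H) (a : Fib H m) :
    (Γ (H := H) (m := m)).neighborFinset (g, a) =
      Finset.univ.biUnion (fun b => (D H m a b).image (fun d => (g * d, b))) := by
  ext ⟨h, b⟩
  simp only [mem_neighborFinset, Finset.mem_biUnion, Finset.mem_univ, true_and,
    Finset.mem_image, adj_iff]
  constructor
  · intro hadj
    exact ⟨b, g⁻¹ * h, hadj, by simp [mul_assoc]⟩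
  · rintro ⟨b', d, hd, heq⟩
    rw [Prod.mk.injEq] at heq
    obtain ⟨rfl, rfl⟩ := heq
    simpa using hd

def dF (a : Fib H m) : ℕ := ∑ b : Fib H m, (D H m a b).card

lemma degree_eq (g : H) (a : Fib H m) :
    (Γ (H := H) (m := m)).degree (g, a) = dF a := by
  rw [← card_neighborFinset_eq_degree, neighborFinset_eq, Finset.card_biUnion]
  · refine Finset.sum_congr rfl fun b _ => ?_
    exact Finset.card_image_of_injective _ (fun d d' hdd => by
      injection hdd with h1 _
      exact mul_left_cancel h1)
  · intro b _ b' _ hbb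
    refine Finset.disjoint_left.2 ?_
    rintro ⟨h, bb⟩ h1 h2
    simp only [Finset.mem_image] at h1 h2
    obtain ⟨d, _, heq⟩ := h1
    obtain ⟨d', _, heq'⟩ := h2
    apply hbb
    injection heq with _ e2
    injection heq' with _ e2'
    rw [e2, e2']


lemma sum_fib (f : Fib H m → ℕ) :
    ∑ b : Fib H m, f b =
      f (Fib.c H m) + ((∑ i, f (Fib.F H m i)) + (∑ i, f (Fib.M H m i))) +
        ∑ k : Fin 3, ∑ j : Fin (m + 2 + k.val), f (Fib.L H m k j) := by
  rw [Fintype.sum_sum_type, Fintype.sum_sum_type, Fintype.sum_sum_type]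
  rw [Fintype.sum_unique]
  congr 1
  rw [← Finset.univ_sigma_univ, Finset.sum_sigma]

lemma one_ne_sig (i : Fin (N H)) : (1 : H) ≠ (sig H i).val := Ne.symm (sig H i).prop

lemma sum_if_val_eq {L v : ℕ} (hv : v < L) :
    ∑ j : Fin L, (if j.val = v then 1 else 0) = 1 := by
  rw [Finset.sum_eq_single_of_mem (⟨v, hv⟩ : Fin L) (Finset.mem_univ _)]
  · simp
  · intro b _ hb
    simp only [ite_eq_right_iff]
    intro hbv
    exact absurd (Fin.ext hbv) hb

lemma count_val_le {L v : ℕ} :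
    ∑ j : Fin L, (if j.val = v then 1 else 0) ≤ 1 := by
  rw [← Finset.sum_filter]
  simp only [Finset.sum_const, smul_eq_mul, mul_one]
  refine Finset.card_le_one.2 (fun a ha b hb => ?_) |>.trans (le_refl 1)
  simp only [Finset.mem_filter] at ha hb
  exact Fin.ext (ha.2.trans hb.2.symm)

lemma count_succ_le {L v : ℕ} :
    ∑ j : Fin L, (if j.val + 1 = v then 1 else 0) ≤ 1 := by
  rw [← Finset.sum_filter]
  simp only [Finset.sum_const, smul_eq_mul, mul_one]
  refine Finset.card_le_one.2 (fun a ha b hb => ?_)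
  simp only [Finset.mem_filter] at ha hb
  exact Fin.ext (by omega)

lemma dF_c_eq : dF (Fib.c H m) = 3 * N H + 3 := by
  unfold dF
  rw [sum_fib]
  simp only [D_cc, D_cF, D_cM, D_cL, Finset.card_empty, Finset.card_singleton]
  have h1 : ∀ i : Fin (N H), ({1, (sig H i).val} : Finset H).card = 2 := fun i =>
    Finset.card_pair (one_ne_sig i)
  rw [Finset.sum_congr rfl (fun i _ => h1 i)]
  have h2 : ∀ k : Fin 3, ∑ j : Fin (m + 2 + k.val),
      (if j.val = 0 then ({1} : Finset H) else ∅).card = 1 := by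
    intro k
    have : ∀ j : Fin (m + 2 + k.val),
        (if j.val = 0 then ({1} : Finset H) else ∅).card = (if j.val = 0 then 1 else 0) := by
      intro j; split <;> simp
    rw [Finset.sum_congr rfl (fun j _ => this j), sum_if_val_eq (by omega)]
  rw [Finset.sum_congr rfl (fun k _ => h2 k)]
  simp [Finset.card_univ, mul_comm]
  ring

lemma dF_F_eq (i : Fin (N H)) : dF (Fib.F H m i) = 3 + 2 * (N H - 1 - i.val) := by
  unfold dF
  rw [sum_fib]
  simp only [D_Fc, D_FF, D_FM, D_FL, Finset.card_empty]
  have h0 : ({1, ((sig H i).val)⁻¹} : Finset H).card = 2 :=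
    Finset.card_pair (fun h => (sig H i).prop (inv_eq_one.mp h.symm))
  have h1 : ∀ j : Fin (N H),
      (if j = i then ({1} : Finset H) else if i < j then {1, (sig H j).val} else ∅).card
        = (if j = i then 1 else 0) + (if i < j then 2 else 0) := by
    intro j
    split_ifs with hb1 hb2
    · exact absurd hb2 (by simp [hb1])
    · simp
    · rw [zero_add]; exact Finset.card_pair (one_ne_sig j)
    · simp
  rw [Finset.sum_congr rfl (fun j _ => h1 j), Finset.sum_add_distrib]
  have h2 : ∑ j : Fin (N H), (if j = i then 1 else 0) = 1 := by
    simp [Finset.sum_ite_eq']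
  have h3 : ∑ j : Fin (N H), (if i < j then 2 else 0) = 2 * (N H - 1 - i.val) := by
    rw [← Finset.sum_filter]
    have : Finset.univ.filter (fun j : Fin (N H) => i < j) = Finset.Ioi i := by
      ext j; simp
    rw [this, Finset.sum_const, Fin.card_Ioi]
    simp [mul_comm]
  rw [h0, h2, h3]
  simp only [Finset.sum_const_zero]
  omega

lemma dF_M_eq (i : Fin (N H)) : dF (Fib.M H m i) = 2 + 2 * i.val := by
  unfold dF
  rw [sum_fib]
  simp only [D_Mc, D_MF, D_MM, D_ML, Finset.card_empty, Finset.card_singleton]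
  have h1 : ∀ j : Fin (N H),
      (if i = j then ({1} : Finset H) else if j < i then {1, ((sig H i).val)⁻¹} else ∅).card
        = (if i = j then 1 else 0) + (if j < i then 2 else 0) := by
    intro j
    split_ifs with hb1 hb2
    · exact absurd hb2 (by simp [hb1])
    · simp
    · rw [zero_add]
      exact Finset.card_pair (by simp [inv_eq_one, one_ne_sig (H := H) i, Ne.symm])
    · simp
  rw [Finset.sum_congr rfl (fun j _ => h1 j), Finset.sum_add_distrib]
  have h2 : ∑ j : Fin (N H), (if i = j then 1 else 0) = 1 := by
    simp [Finset.sum_ite_eq]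
  have h3 : ∑ j : Fin (N H), (if j < i then 2 else 0) = 2 * i.val := by
    rw [← Finset.sum_filter]
    have : Finset.univ.filter (fun j : Fin (N H) => j < i) = Finset.Iio i := by
      ext j; simp
    rw [this, Finset.sum_const, Fin.card_Iio]
    simp [mul_comm]
  rw [h2, h3]
  simp only [Finset.sum_const_zero]
  omega

lemma dF_L_le (k : Fin 3) (j : Fin (m + 2 + k.val)) : dF (Fib.L H m k j) ≤ 2 := by
  unfold dF
  rw [sum_fib]
  simp only [D_Lc, D_LF, D_LM, D_LL, Finset.card_empty, Finset.sum_const_zero]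
  have hL : ∀ (k' : Fin 3) (j' : Fin (m + 2 + k'.val)),
      (if k.val = k'.val ∧ (j'.val = j.val + 1 ∨ j.val = j'.val + 1)
        then ({1} : Finset H) else ∅).card
      = (if k.val = k'.val ∧ j'.val = j.val + 1 then 1 else 0)
        + (if k.val = k'.val ∧ j.val = j'.val + 1 then 1 else 0) := by
    intro k' j'
    by_cases hk : k.val = k'.val
    · by_cases hs : j'.val = j.val + 1
      · have hp : ¬ (j.val = j'.val + 1) := by omega
        simp [hk, hs, hp]
        omega
      · by_cases hp : j.val = j'.val + 1 <;> simp [hk, hs, hp] <;> omega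
    · simp [hk]
  rw [Finset.sum_congr rfl (fun k' _ => Finset.sum_congr rfl (fun j' _ => hL k' j'))]
  simp only [Finset.sum_add_distrib]
  have S1 : ∑ k' : Fin 3, ∑ j' : Fin (m + 2 + k'.val),
      (if k.val = k'.val ∧ j'.val = j.val + 1 then 1 else 0) ≤ 1 := by
    calc ∑ k' : Fin 3, ∑ j' : Fin (m + 2 + k'.val),
        (if k.val = k'.val ∧ j'.val = j.val + 1 then 1 else 0)
        ≤ ∑ k' : Fin 3, (if k = k' then 1 else 0) := by
          refine Finset.sum_le_sum (fun k' _ => ?_)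
          by_cases hk : k = k'
          · subst hk
            rw [if_pos rfl]
            have he : ∀ j' : Fin (m + 2 + k.val),
                (if k.val = k.val ∧ j'.val = j.val + 1 then 1 else 0)
                  = (if j'.val = j.val + 1 then 1 else 0) := by
              intro j'; simp
            rw [Finset.sum_congr rfl (fun j' _ => he j')]
            exact count_val_le
          · rw [if_neg hk]
            refine le_of_eq (Finset.sum_eq_zero (fun j' _ => ?_))
            rw [if_neg]
            rintro ⟨h1, -⟩
            exact hk (Fin.ext h1)
      _ = 1 := by rw [Finset.sum_ite_eq]; simp
  have S2 : ∑ k' : Fin 3, ∑ j' : Fin (m + 2 + k'.val),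
      (if k.val = k'.val ∧ j.val = j'.val + 1 then 1 else 0) ≤ 1 := by
    calc ∑ k' : Fin 3, ∑ j' : Fin (m + 2 + k'.val),
        (if k.val = k'.val ∧ j.val = j'.val + 1 then 1 else 0)
        ≤ ∑ k' : Fin 3, (if k = k' then 1 else 0) := by
          refine Finset.sum_le_sum (fun k' _ => ?_)
          by_cases hk : k = k'
          · subst hk
            rw [if_pos rfl]
            have he : ∀ j' : Fin (m + 2 + k.val),
                (if k.val = k.val ∧ j.val = j'.val + 1 then 1 else 0)
                  = (if j'.val + 1 = j.val then 1 else 0) := by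
              intro j'
              by_cases hc : j.val = j'.val + 1
              · rw [if_pos ⟨rfl, hc⟩, if_pos (by omega)]
              · rw [if_neg (by rintro ⟨-, h⟩; exact hc h), if_neg (by omega)]
            rw [Finset.sum_congr rfl (fun j' _ => he j')]
            exact count_succ_le
          · rw [if_neg hk]
            refine le_of_eq (Finset.sum_eq_zero (fun j' _ => ?_))
            rw [if_neg]
            rintro ⟨h1, -⟩
            exact hk (Fin.ext h1)
      _ = 1 := by rw [Finset.sum_ite_eq]; simp
  by_cases hj : j.val = 0
  · have hS2 : ∑ k' : Fin 3, ∑ j' : Fin (m + 2 + k'.val),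
        (if k.val = k'.val ∧ j.val = j'.val + 1 then 1 else 0) = 0 :=
      Finset.sum_eq_zero (fun k' _ => Finset.sum_eq_zero (fun j' _ => by
        rw [if_neg]; rintro ⟨-, h2⟩; omega))
    rw [if_pos hj, hS2]
    simp only [Finset.card_singleton, Finset.card_empty]
    omega
  · rw [if_neg hj]
    simp only [Finset.card_singleton, Finset.card_empty]
    omega

lemma iso_degree (φ : (Γ : SimpleGraph (H × Fib H m)) ≃g Γ) (x : H × Fib H m) :
    (Γ : SimpleGraph (H × Fib H m)).degree (φ x) = (Γ : SimpleGraph (H × Fib H m)).degree x := by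
  rw [← card_neighborSet_eq_degree, ← card_neighborSet_eq_degree]
  exact Fintype.card_congr (φ.mapNeighborSet x).symm

lemma image_dF (φ : (Γ : SimpleGraph (H × Fib H m)) ≃g Γ) (g : H) (a : Fib H m) :
    dF (H := H) (m := m) (φ (g, a)).2 = dF a := by
  have h2 : ∀ p : H × Fib H m, (Γ : SimpleGraph (H × Fib H m)).degree p = dF p.2 :=
    fun p => degree_eq p.1 p.2
  exact ((h2 _).symm.trans (iso_degree φ (g, a))).trans (h2 (g, a))

lemma fiber_c (φ : (Γ : SimpleGraph (H × Fib H m)) ≃g Γ) (g : H) :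
    ∃ h, φ (g, Fib.c H m) = (h, Fib.c H m) := by
  have hd := image_dF φ g (Fib.c H m)
  rw [dF_c_eq] at hd
  rcases hE : φ (g, Fib.c H m) with ⟨h, (⟨⟩ | i | i) | ⟨k, j⟩⟩ <;> rw [hE] at hd
  · exact ⟨h, rfl⟩
  · rw [dF_F_eq (H := H) (m := m) i] at hd
    have := i.isLt
    omega
  · rw [dF_M_eq (H := H) (m := m) i] at hd
    have := i.isLt
    omega
  · have hd2 : dF (H := H) (m := m) (Fib.L H m k j) = 3 * N H + 3 := hd
    have := dF_L_le (H := H) (m := m) k j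
    omega

lemma fiber_F (φ : (Γ : SimpleGraph (H × Fib H m)) ≃g Γ) (g : H) (i : Fin (N H)) :
    ∃ h, φ (g, Fib.F H m i) = (h, Fib.F H m i) := by
  have hd := image_dF φ g (Fib.F H m i)
  rw [dF_F_eq] at hd
  have hi := i.isLt
  rcases hE : φ (g, Fib.F H m i) with ⟨h, (⟨⟩ | i' | i') | ⟨k, j⟩⟩ <;> rw [hE] at hd
  · rw [dF_c_eq (H := H) (m := m)] at hd
    omega
  · rw [dF_F_eq (H := H) (m := m) i'] at hd
    have hi' := i'.isLt
    have : i' = i := Fin.ext (by omega)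
    exact ⟨h, by rw [this]⟩
  · rw [dF_M_eq (H := H) (m := m) i'] at hd
    omega
  · have hd2 : dF (H := H) (m := m) (Fib.L H m k j) = 3 + 2 * (N H - 1 - i.val) := hd
    have := dF_L_le (H := H) (m := m) k j
    omega

lemma fiber_M (φ : (Γ : SimpleGraph (H × Fib H m)) ≃g Γ) (g : H) (i : Fin (N H)) :
    ∃ h, φ (g, Fib.M H m i) = (h, Fib.M H m i) := by
  have hd := image_dF φ g (Fib.M H m i)
  rw [dF_M_eq] at hd
  have hi := i.isLt
  rcases hE : φ (g, Fib.M H m i) with ⟨h, (⟨⟩ | i' | i') | ⟨k, j⟩⟩ <;> rw [hE] at hd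
  · rw [dF_c_eq (H := H) (m := m)] at hd
    omega
  · rw [dF_F_eq (H := H) (m := m) i'] at hd
    omega
  · rw [dF_M_eq (H := H) (m := m) i'] at hd
    have : i' = i := Fin.ext (by omega)
    exact ⟨h, by rw [this]⟩
  · -- impossible: the image of `(g, M i)` must be adjacent to the image of `(g, F i)`,
    -- which lies in the `F i` fiber, but leg vertices have no `F`-neighbours.
    exfalso
    obtain ⟨h', hF⟩ := fiber_F φ g i
    have hadj : (Γ : SimpleGraph (H × Fib H m)).Adj (g, Fib.M H m i) (g, Fib.F H m i) := by
      rw [adj_iff]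
      simp
    have := φ.map_adj_iff.2 hadj
    rw [hE, hF] at this
    rw [adj_iff] at this
    simpa using this

lemma fiber_L (φ : (Γ : SimpleGraph (H × Fib H m)) ≃g Γ) (g : H) (k : Fin 3)
    (j : Fin (m + 2 + k.val)) :
    ∃ h k' j', φ (g, Fib.L H m k j) = (h, Fib.L H m k' j') := by
  rcases hE : φ (g, Fib.L H m k j) with ⟨h, (⟨⟩ | i | i) | ⟨k', j'⟩⟩
  · obtain ⟨h', hc'⟩ := fiber_c φ.symm h
    have hs : φ.symm (h, Fib.c H m) = (g, Fib.L H m k j) := by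
      rw [← hE]; exact φ.symm_apply_apply _
    rw [hs] at hc'
    simp [Prod.ext_iff] at hc'
  · obtain ⟨h', hc'⟩ := fiber_F φ.symm h i
    have hs : φ.symm (h, Fib.F H m i) = (g, Fib.L H m k j) := by
      rw [← hE]; exact φ.symm_apply_apply _
    rw [hs] at hc'
    simp [Prod.ext_iff] at hc'
  · obtain ⟨h', hc'⟩ := fiber_M φ.symm h i
    have hs : φ.symm (h, Fib.M H m i) = (g, Fib.L H m k j) := by
      rw [← hE]; exact φ.symm_apply_apply _
    rw [hs] at hc'
    simp [Prod.ext_iff] at hc'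
  · exact ⟨h, k', j', rfl⟩

lemma legs_map (φ : (Γ : SimpleGraph (H × Fib H m)) ≃g Γ) (g : H) (k : Fin 3) :
    ∃ k' : Fin 3, ∀ (j : ℕ) (hj : j < m + 2 + k.val), ∃ hj' : j < m + 2 + k'.val,
      φ (g, Fib.L H m k ⟨j, hj⟩) = ((φ (g, Fib.c H m)).1, Fib.L H m k' ⟨j, hj'⟩) := by
  obtain ⟨τg, hτg⟩ := fiber_c φ g
  have hfst : (φ (g, Fib.c H m)).1 = τg := by rw [hτg]
  obtain ⟨h0, k0, j0, hE0⟩ := fiber_L φ g k ⟨0, by omega⟩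
  have hadj0 : (Γ : SimpleGraph (H × Fib H m)).Adj
      (g, Fib.L H m k ⟨0, by omega⟩) (g, Fib.c H m) := by
    rw [adj_iff]; simp
  have hbase := φ.map_adj_iff.2 hadj0
  rw [hE0, hτg, adj_iff] at hbase
  simp only [D_Lc] at hbase
  by_cases hj0 : j0.val = 0
  swap
  · rw [if_neg hj0] at hbase
    simp at hbase
  rw [if_pos hj0] at hbase
  rw [Finset.mem_singleton] at hbase
  have hh0 : h0 = τg := by
    have := inv_mul_eq_one.mp hbase
    exact this
  refine ⟨k0, ?_⟩
  intro j
  induction j using Nat.strong_induction_on with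
  | _ j IH =>
    intro hj
    match j with
    | 0 =>
      refine ⟨by omega, ?_⟩
      rw [hE0, hh0, hfst]
      have hj00 : j0 = ⟨0, by omega⟩ := Fin.ext (by show j0.val = 0; omega)
      exact congrArg (fun t => (τg, Fib.L H m k0 t)) hj00
    | (j + 1) =>
      obtain ⟨hj'c, hEj⟩ := IH j (by omega) (by omega)
      obtain ⟨h1, k1, j1, hE1⟩ := fiber_L φ g k ⟨j + 1, hj⟩
      have hadj : (Γ : SimpleGraph (H × Fib H m)).Adj
          (g, Fib.L H m k ⟨j + 1, hj⟩) (g, Fib.L H m k ⟨j, by omega⟩) := by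
        rw [adj_iff]; simp
      have h2 := φ.map_adj_iff.2 hadj
      rw [hE1, hEj, adj_iff] at h2
      simp only [D_LL] at h2
      split at h2
      case isFalse => simp at h2
      case isTrue hcond =>
        obtain ⟨hk10, hdisj⟩ := hcond
        rw [Finset.mem_singleton] at h2
        have hh1 : h1 = (φ (g, Fib.c H m)).1 := inv_mul_eq_one.mp h2
        have hk1 : k1 = k0 := Fin.ext hk10
        subst hk1
        have hdisj' : j = j1.val + 1 ∨ j1.val = j + 1 := hdisj
        rcases hdisj' with hd1 | hd2
        · -- the image went backwards; contradict injectivity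
          exfalso
          rcases Nat.eq_zero_or_pos j with rfl | hjpos
          · omega
          · obtain ⟨hj'm, hEm⟩ := IH (j - 1) (by omega) (by omega)
            have hj1 : j1 = ⟨j - 1, by omega⟩ := Fin.ext (by show j1.val = j - 1; omega)
            have heq : φ (g, Fib.L H m k ⟨j - 1, by omega⟩)
                = φ (g, Fib.L H m k ⟨j + 1, hj⟩) := by
              rw [hEm, hE1, hh1]
              exact congrArg (fun t => ((φ (g, Fib.c H m)).1, Fib.L H m k1 t)) hj1.symm
            have := φ.injective heq
            simp [Prod.ext_iff, Fin.ext_iff] at this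
        · refine ⟨by have := j1.isLt; omega, ?_⟩
          have hj1 : j1 = ⟨j + 1, by have := j1.isLt; omega⟩ :=
            Fin.ext (by show j1.val = j + 1; omega)
          rw [hE1, hh1]
          exact congrArg (fun t => ((φ (g, Fib.c H m)).1, Fib.L H m k1 t)) hj1

lemma legs_map_self (φ : (Γ : SimpleGraph (H × Fib H m)) ≃g Γ) (g : H) (k : Fin 3)
    (j : ℕ) (hj : j < m + 2 + k.val) :
    φ (g, Fib.L H m k ⟨j, hj⟩) = ((φ (g, Fib.c H m)).1, Fib.L H m k ⟨j, hj⟩) := by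
  obtain ⟨k', hk'⟩ := legs_map φ g k
  obtain ⟨τg, hτg⟩ := fiber_c φ g
  have hfst : (φ (g, Fib.c H m)).1 = τg := by rw [hτg]
  have hlen1 : k.val ≤ k'.val := by
    obtain ⟨hj', -⟩ := hk' (m + 1 + k.val) (by omega)
    omega
  obtain ⟨k'', hk''⟩ := legs_map φ.symm τg k'
  have hsymc : φ.symm (τg, Fib.c H m) = (g, Fib.c H m) := by
    rw [← hτg]; exact φ.symm_apply_apply _
  have hsymfst : (φ.symm (τg, Fib.c H m)).1 = g := by rw [hsymc]
  obtain ⟨h0', hB⟩ := hk' 0 (by omega)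
  have hS : φ.symm (τg, Fib.L H m k' ⟨0, h0'⟩) = (g, Fib.L H m k ⟨0, by omega⟩) := by
    rw [← hfst, ← hB]
    exact φ.symm_apply_apply _
  obtain ⟨h0'', hB'⟩ := hk'' 0 (by omega)
  have hcomb : ((φ.symm (τg, Fib.c H m)).1, Fib.L H m k'' ⟨0, h0''⟩)
      = (g, Fib.L H m k ⟨0, by omega⟩) := by
    rw [← hB']
    exact hS
  have hsnd := congrArg Prod.snd hcomb
  have h2 : (⟨k'', ⟨0, h0''⟩⟩ : Σ kk : Fin 3, Fin (m + 2 + kk.val))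
      = ⟨k, ⟨0, by omega⟩⟩ := Sum.inr_injective hsnd
  have hk''k : k'' = k := congrArg Sigma.fst h2
  have hlen2 : k'.val ≤ k.val := by
    obtain ⟨hj'', -⟩ := hk'' (m + 1 + k'.val) (by omega)
    rw [hk''k] at hj''
    omega
  have hkk' : k' = k := Fin.ext (by omega)
  subst hkk'
  obtain ⟨hj', hE⟩ := hk' j hj
  exact hE

theorem rigid (φ : (Γ : SimpleGraph (H × Fib H m)) ≃g Γ) (x : H × Fib H m) :
    φ x = ((φ (1, Fib.c H m)).1 * x.1, x.2) := by
  have hcc : ∀ g, φ (g, Fib.c H m) = ((φ (g, Fib.c H m)).1, Fib.c H m) := by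
    intro g; obtain ⟨h, hE⟩ := fiber_c φ g; rw [hE]
  have hMM : ∀ g i, φ (g, Fib.M H m i) = ((φ (g, Fib.c H m)).1, Fib.M H m i) := by
    intro g i
    obtain ⟨h, hE⟩ := fiber_M φ g i
    have hadj : (Γ : SimpleGraph (H × Fib H m)).Adj (g, Fib.c H m) (g, Fib.M H m i) := by
      rw [adj_iff]; simp
    have h2 := φ.map_adj_iff.2 hadj
    rw [hE, hcc g, adj_iff] at h2
    simp only [D_cM, Finset.mem_singleton] at h2
    rw [hE]
    exact congrArg (fun t => (t, Fib.M H m i)) (inv_mul_eq_one.mp h2).symm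
  have hFF : ∀ g i, φ (g, Fib.F H m i) = ((φ (g, Fib.c H m)).1, Fib.F H m i) := by
    intro g i
    obtain ⟨h, hE⟩ := fiber_F φ g i
    have hadj : (Γ : SimpleGraph (H × Fib H m)).Adj (g, Fib.F H m i) (g, Fib.M H m i) := by
      rw [adj_iff]; simp
    have h2 := φ.map_adj_iff.2 hadj
    rw [hE, hMM g i, adj_iff] at h2
    have hD : D H m (Fib.F H m i) (Fib.M H m i) = {1} := by
      rw [D_FM, if_pos rfl]
    rw [hD, Finset.mem_singleton] at h2
    rw [hE]
    exact congrArg (fun t => (t, Fib.F H m i)) (inv_mul_eq_one.mp h2)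
  have hinj : ∀ a b : H, (φ (a, Fib.c H m)).1 = (φ (b, Fib.c H m)).1 → a = b := by
    intro a b hab
    have h1 : φ (a, Fib.c H m) = φ (b, Fib.c H m) := by rw [hcc a, hcc b, hab]
    have h2 := φ.injective h1
    exact (Prod.ext_iff.mp h2).1
  have pin : ∀ (g s : H), s ≠ 1 →
      (φ (g * s, Fib.c H m)).1 = (φ (g, Fib.c H m)).1 * s := by
    intro g s hs
    obtain ⟨i, hi⟩ : ∃ i, (sig H i).val = s := ⟨(sig H).symm ⟨s, hs⟩, by simp⟩
    have hadj : (Γ : SimpleGraph (H × Fib H m)).Adj (g, Fib.c H m)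
        (g * s, Fib.F H m i) := by
      rw [adj_iff]
      simp only [D_cF, Finset.mem_insert, Finset.mem_singleton]
      right
      rw [hi, inv_mul_cancel_left]
    have h2 := φ.map_adj_iff.2 hadj
    rw [hcc g, hFF (g * s) i, adj_iff] at h2
    simp only [D_cF, Finset.mem_insert, Finset.mem_singleton] at h2
    rcases h2 with h2 | h2
    · exfalso
      have h3 := hinj g (g * s) (inv_mul_eq_one.mp h2)
      exact hs (left_eq_mul.mp h3)
    · rw [hi] at h2
      have h4 := congrArg (fun t => (φ (g, Fib.c H m)).1 * t) h2
      simp only [mul_inv_cancel_left] at h4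
      exact h4
  have hu : ∀ g, (φ (g, Fib.c H m)).1 = (φ (1, Fib.c H m)).1 * g := by
    intro g
    by_cases hg : g = 1
    · subst hg; rw [mul_one]
    · have h1 := pin 1 g hg
      rw [one_mul g] at h1
      exact h1
  rcases x with ⟨g, (⟨⟩ | i | i) | ⟨k, j⟩⟩
  · have h1 := hcc g; rw [hu g] at h1; exact h1
  · have h1 := hFF g i; rw [hu g] at h1; exact h1
  · have h1 := hMM g i; rw [hu g] at h1; exact h1
  · obtain ⟨jv, hjv⟩ := j
    have h1 := legs_map_self φ g k jv hjv; rw [hu g] at h1; exact h1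

end

end Frucht



namespace Frucht

open Finset SimpleGraph

noncomputable section

variable (H : Type) [Group H] [Fintype H] [DecidableEq H] (m : ℕ)

abbrev Gam : SimpleGraph (H × Fib H m) := Γ

variable {H m}

def toAut (u : H) : (Gam H m) ≃g (Gam H m) where
  toEquiv := (Equiv.mulLeft u).prodCongr (Equiv.refl _)
  map_rel_iff' := by
    rintro ⟨g, a⟩ ⟨h, b⟩
    have : (u * g)⁻¹ * (u * h) = g⁻¹ * h := by group
    show (Gam H m).Adj (u * g, a) (u * h, b) ↔ _
    rw [adj_iff, adj_iff, this]

@[simp] lemma toAut_apply (u : H) (x : H × Fib H m) :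
    (toAut u) x = (u * x.1, x.2) := rfl

def autEquiv : (H ≃* ((Gam H m) ≃g (Gam H m))) where
  toFun u := toAut u
  invFun φ := (φ (1, Fib.c H m)).1
  left_inv u := by simp
  right_inv φ := by
    apply RelIso.ext
    intro x
    rw [rigid φ x]
    rfl
  map_mul' u v := by
    apply RelIso.ext
    intro x
    show ((u * v) * x.1, x.2) = toAut u (toAut v x)
    simp [mul_assoc]

lemma connected : (Gam H m).Connected := by
  rw [connected_iff]
  refine ⟨?_, ⟨(1, Fib.c H m)⟩⟩
  have hc : ∀ g : H, (Gam H m).Reachable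
      (g, Fib.c H m) (1, Fib.c H m) := by
    intro g
    by_cases hg : g = 1
    · subst hg; exact Reachable.refl _
    · have hg' : g⁻¹ ≠ 1 := inv_ne_one.mpr hg
      set i := (sig H).symm ⟨g⁻¹, hg'⟩ with hi
      have hσ : (sig H i).val = g⁻¹ := by rw [hi]; simp
      have adj1 : (Gam H m).Adj (g, Fib.c H m) (1, Fib.F H m i) := by
        rw [adj_iff]
        simp only [D_cF, Finset.mem_insert, Finset.mem_singleton]
        right
        rw [hσ, mul_one]
      have adj2 : (Gam H m).Adj (1, Fib.F H m i) (1, Fib.c H m) := by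
        rw [adj_iff]
        simp
      exact (adj1.reachable).trans adj2.reachable
  have hx : ∀ z : H × Fib H m,
      (Gam H m).Reachable z (1, Fib.c H m) := by
    rintro ⟨g, (⟨⟩ | i | i) | ⟨k, j⟩⟩
    · exact hc g
    · have adj1 : (Gam H m).Adj (g, Fib.F H m i) (g, Fib.c H m) := by
        rw [adj_iff]; simp
      exact adj1.reachable.trans (hc g)
    · have adj1 : (Gam H m).Adj (g, Fib.M H m i) (g, Fib.c H m) := by
        rw [adj_iff]; simp
      exact adj1.reachable.trans (hc g)
    · obtain ⟨jv, hjv⟩ := j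
      induction jv with
      | zero =>
        have adj1 : (Gam H m).Adj
            (g, Fib.L H m k ⟨0, hjv⟩) (g, Fib.c H m) := by
          rw [adj_iff]; simp
        exact adj1.reachable.trans (hc g)
      | succ n IH =>
        have adj1 : (Gam H m).Adj
            (g, Fib.L H m k ⟨n + 1, hjv⟩) (g, Fib.L H m k ⟨n, by omega⟩) := by
          rw [adj_iff]; simp
        exact adj1.reachable.trans (IH (by omega))
  intro x y
  exact (hx x).trans (hx y).symm

lemma card_eq : Fintype.card (H × Fib H m) = Fintype.card H * (2 * N H + 3 * m + 10) := by
  rw [Fintype.card_prod]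
  congr 1
  show Fintype.card ((Unit ⊕ Fin (N H) ⊕ Fin (N H)) ⊕ (Σ k : Fin 3, Fin (m + 2 + k.val))) = _
  rw [Fintype.card_sum, Fintype.card_sum, Fintype.card_sum, Fintype.card_sigma]
  rw [Fin.sum_univ_three]
  simp only [Fintype.card_unit, Fintype.card_fin]
  show 1 + (N H + N H) + ((m + 2 + 0) + (m + 2 + 1) + (m + 2 + 2)) = _
  ring

end

end Frucht

/-- **Frucht's theorem (strong form).** For every finite group `G` there exist infinitely
many pairwise non-isomorphic finite connected simple graphs whose automorphism group is
isomorphic to `G`. -/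
theorem frucht_infinitely_many_connected (G : Type*) [Group G] [Finite G] :
    ∃ (V : ℕ → Type) (_ : ∀ n, Fintype (V n)) (Γ : ∀ n, SimpleGraph (V n)),
      (∀ n, (Γ n).Connected) ∧
      (∀ m n, m ≠ n → IsEmpty (Γ m ≃g Γ n)) ∧
      (∀ n, Nonempty ((Γ n ≃g Γ n) ≃* G)) := by
  classical
  have hsmall : Small.{0} G := by infer_instance
  letI H : Type := Shrink.{0} G
  letI : Fintype G := Fintype.ofFinite G
  letI : Fintype H := Fintype.ofEquiv G (equivShrink G)
  letI : DecidableEq H := Classical.decEq H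
  refine ⟨fun n => H × Frucht.Fib H n, fun n => inferInstance, fun n => Frucht.Gam H n,
    ?_, ?_, ?_⟩
  · intro n
    exact Frucht.connected
  · intro m n hmn
    constructor
    intro f
    apply hmn
    have hcard := Fintype.card_congr f.toEquiv
    rw [Frucht.card_eq, Frucht.card_eq] at hcard
    have hH : 0 < Fintype.card H := Fintype.card_pos
    have := Nat.eq_of_mul_eq_mul_left hH hcard
    omega
  · intro n
    exact ⟨MulEquiv.trans (MulEquiv.symm (Frucht.autEquiv (H := H) (m := n)))
      (Shrink.mulEquiv : Shrink.{0} G ≃* G)⟩
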